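/- arXiv:math/0405207 — 2 statements merged into one kernel-verified Lean document; each statement's English description precedes it below -/
import Mathlib

section
/- Let T > 0 and let K : ℝ → ℝ → Matrix (Fin n) (Fin n) ℝ be measurable with ‖K(s,t)‖ ≤ M for 0 ≤ t ≤ s ≤ T, with resolvent kernel R(s,t) := ∑_{m=1}^∞ K^{*m}(s,t) (so that for every continuous h, x(s) = h(s) + ∫₀^s R(s,t)h(t)dt solves x(s) = h(s) + ∫₀^s K(s,t)x(t)dt). Then for every bounded measurable η : [0,T] → ℝⁿ, the function y(t) := η(t) + ∫_t^T η(s)ᵀ·R(s,t) ds (row-vector–matrix products, i.e. y(t)ᵀ = η(t)ᵀ + ∫_t^T η(s)ᵀ R(s,t) ds) satisfies the dual (backward) Volterra equation y(t)ᵀ = η(t)ᵀ + ∫_t^T y(s)ᵀ·K(s,t) ds for all t ∈ [0,T]. -/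
open scoped Matrix
open Set

attribute [local instance] Matrix.linftyOpNormedAddCommGroup Matrix.linftyOpNormedSpace

/-- The convolution `(K₁ * K₂)(s,t) = ∫_t^s K₁(s,r)·K₂(r,t) dr` of two matrix kernels. -/
noncomputable def kernelConv {n : ℕ} (K₁ K₂ : ℝ → ℝ → Matrix (Fin n) (Fin n) ℝ) :
    ℝ → ℝ → Matrix (Fin n) (Fin n) ℝ :=
  fun s t => ∫ r in t..s, K₁ s r * K₂ r t

/-- The iterated kernels: `iterKernel K m = K^{*(m+1)}`, i.e. `iterKernel K 0 = K` and
`iterKernel K (m+1) = K * (iterKernel K m)`. -/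
noncomputable def iterKernel {n : ℕ} (K : ℝ → ℝ → Matrix (Fin n) (Fin n) ℝ) :
    ℕ → ℝ → ℝ → Matrix (Fin n) (Fin n) ℝ
  | 0 => K
  | m + 1 => kernelConv K (iterKernel K m)

/-- The resolvent kernel `R(s,t) = ∑_{m=1}^∞ K^{*m}(s,t)`. -/
noncomputable def resolventKernel {n : ℕ} (K : ℝ → ℝ → Matrix (Fin n) (Fin n) ℝ)
    (s t : ℝ) : Matrix (Fin n) (Fin n) ℝ :=
  ∑' m : ℕ, iterKernel K m s t

open MeasureTheory Function Filter
open scoped ENNReal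

namespace RDAux

variable {n : ℕ}


noncomputable def entryCLM (i j : Fin n) : Matrix (Fin n) (Fin n) ℝ →L[ℝ] ℝ :=
  LinearMap.toContinuousLinearMap
    { toFun := fun A => A i j, map_add' := fun _ _ => rfl, map_smul' := fun _ _ => rfl }

@[simp] lemma entryCLM_apply (i j : Fin n) (A : Matrix (Fin n) (Fin n) ℝ) :
    entryCLM i j A = A i j := rfl

/-- strong measurability of a matrix-valued function from entrywise measurability -/
lemma matrix_decomp (A : Matrix (Fin n) (Fin n) ℝ) :
    ∑ i, ∑ j, A i j • Matrix.single i j (1 : ℝ) = A := by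
  ext a b
  simp [Matrix.single, Matrix.sum_apply, ite_and]

lemma sm_matrix {α : Type*} [MeasurableSpace α] {f : α → Matrix (Fin n) (Fin n) ℝ}
    (h : ∀ i j, Measurable fun x => f x i j) : StronglyMeasurable f := by
  have : f = fun x => ∑ i, ∑ j, (f x i j) • Matrix.single i j (1 : ℝ) := by
    funext x; rw [matrix_decomp (f x)]
  rw [this]
  refine Finset.stronglyMeasurable_fun_sum _ fun i _ => ?_
  refine Finset.stronglyMeasurable_fun_sum _ fun j _ => ?_
  exact ((h i j).stronglyMeasurable).smul stronglyMeasurable_const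

lemma entry_measurable {α : Type*} [MeasurableSpace α] {f : α → Matrix (Fin n) (Fin n) ℝ}
    (h : StronglyMeasurable f) (i j : Fin n) : Measurable fun x => f x i j :=
  ((entryCLM i j).continuous.comp_stronglyMeasurable h).measurable

lemma continuous_entry (i j : Fin n) : Continuous fun A : Matrix (Fin n) (Fin n) ℝ => A i j :=
  (entryCLM i j).continuous

lemma continuous_matMul :
    Continuous fun q : Matrix (Fin n) (Fin n) ℝ × Matrix (Fin n) (Fin n) ℝ => q.1 * q.2 := by
  have : ∀ i j, Continuous fun q : Matrix (Fin n) (Fin n) ℝ × Matrix (Fin n) (Fin n) ℝ =>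
      (q.1 * q.2) i j := by
    intro i j
    simp only [Matrix.mul_apply]
    exact continuous_finset_sum _ fun k _ =>
      ((continuous_entry i k).comp continuous_fst).mul ((continuous_entry k j).comp continuous_snd)
  -- continuity into matrix space via stdBasis decomposition
  have hrw : (fun q : Matrix (Fin n) (Fin n) ℝ × Matrix (Fin n) (Fin n) ℝ => q.1 * q.2)
      = fun q => ∑ i, ∑ j, ((q.1 * q.2) i j) • Matrix.single i j (1 : ℝ) := by
    funext q; rw [matrix_decomp]
  rw [hrw]
  exact continuous_finset_sum _ fun i _ => continuous_finset_sum _ fun j _ =>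
    (this i j).smul continuous_const

lemma continuous_vecMul :
    Continuous fun q : (Fin n → ℝ) × Matrix (Fin n) (Fin n) ℝ => q.1 ᵥ* q.2 := by
  have hrw : (fun q : (Fin n → ℝ) × Matrix (Fin n) (Fin n) ℝ => q.1 ᵥ* q.2)
      = fun q => ∑ i, q.1 i • (fun j => q.2 i j) := by
    funext q j
    simp [Matrix.vecMul, dotProduct, Finset.sum_apply]
  rw [hrw]
  refine continuous_finset_sum _ fun i _ => ?_
  exact ((continuous_apply i).comp continuous_fst).smul
    (continuous_pi fun j => (continuous_entry i j).comp continuous_snd)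

/-- `A ↦ v ᵥ* A` as a CLM -/
noncomputable def vecMulCLM (v : Fin n → ℝ) :
    Matrix (Fin n) (Fin n) ℝ →L[ℝ] (Fin n → ℝ) :=
  LinearMap.toContinuousLinearMap
    { toFun := fun A => v ᵥ* A,
      map_add' := fun A B => by simp only [Matrix.vecMul_add],
      map_smul' := fun c A => by
        funext j
        simp [Matrix.vecMul, dotProduct, Finset.mul_sum, mul_left_comm] }

@[simp] lemma vecMulCLM_apply (v : Fin n → ℝ) (A : Matrix (Fin n) (Fin n) ℝ) :
    vecMulCLM v A = v ᵥ* A := rfl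

/-- `w ↦ w ᵥ* B` as a CLM -/
noncomputable def vecMulRightCLM (B : Matrix (Fin n) (Fin n) ℝ) :
    (Fin n → ℝ) →L[ℝ] (Fin n → ℝ) :=
  LinearMap.toContinuousLinearMap B.vecMulLinear

@[simp] lemma vecMulRightCLM_apply (B : Matrix (Fin n) (Fin n) ℝ) (w : Fin n → ℝ) :
    vecMulRightCLM B w = w ᵥ* B := rfl

/-- `A ↦ A * B` as a CLM -/
noncomputable def mulRightCLM (B : Matrix (Fin n) (Fin n) ℝ) :
    Matrix (Fin n) (Fin n) ℝ →L[ℝ] Matrix (Fin n) (Fin n) ℝ :=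
  LinearMap.toContinuousLinearMap (LinearMap.mulRight ℝ B)

@[simp] lemma mulRightCLM_apply (B A : Matrix (Fin n) (Fin n) ℝ) :
    mulRightCLM B A = A * B := rfl

/-- `A ↦ B * A` as a CLM -/
noncomputable def mulLeftCLM (B : Matrix (Fin n) (Fin n) ℝ) :
    Matrix (Fin n) (Fin n) ℝ →L[ℝ] Matrix (Fin n) (Fin n) ℝ :=
  LinearMap.toContinuousLinearMap (LinearMap.mulLeft ℝ B)

@[simp] lemma mulLeftCLM_apply (B A : Matrix (Fin n) (Fin n) ℝ) :
    mulLeftCLM B A = B * A := rfl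

/-- a.e.-strong measurability of a pointwise `tsum` from a.e. summability. -/
lemma aesm_tsum_of_summable {α : Type*} [MeasurableSpace α] {μ : Measure α}
    {E : Type*} [NormedAddCommGroup E] [NormedSpace ℝ E]
    {f : ℕ → α → E} (hf : ∀ m, StronglyMeasurable (f m))
    (h : ∀ᵐ x ∂μ, Summable fun m => f m x) :
    AEStronglyMeasurable (fun x => ∑' m, f m x) μ := by
  refine aestronglyMeasurable_of_tendsto_ae atTop
    (f := fun N x => ∑ m ∈ Finset.range N, f m x) (fun N => ?_) ?_
  · exact (Finset.stronglyMeasurable_fun_sum _ fun m _ => hf m).aestronglyMeasurable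
  · filter_upwards [h] with x hx
    exact hx.hasSum.tendsto_sum_nat

lemma abs_entry_le_norm (A : Matrix (Fin n) (Fin n) ℝ) (i j : Fin n) : |A i j| ≤ ‖A‖ := by
  have h1 : ‖A i j‖₊ ≤ ∑ k, ‖A i k‖₊ := Finset.single_le_sum (f := fun k => ‖A i k‖₊) (fun k _ => zero_le) (Finset.mem_univ j)
  have h2 : (∑ k, ‖A i k‖₊) ≤ ‖A‖₊ := by
    rw [Matrix.linfty_opNNNorm_def]
    exact Finset.le_sup (f := fun i : Fin n => ∑ j, ‖A i j‖₊) (Finset.mem_univ i)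
  calc (|A i j| : ℝ) = ‖A i j‖₊ := by rw [← Real.norm_eq_abs]; rfl
  _ ≤ (‖A‖₊ : ℝ) := by exact_mod_cast h1.trans h2
  _ = ‖A‖ := rfl

lemma vecMul_eq_sum' (v : Fin n → ℝ) (A : Matrix (Fin n) (Fin n) ℝ) :
    v ᵥ* A = ∑ i, v i • A i := by
  funext j
  simp [Matrix.vecMul, dotProduct, Finset.sum_apply]

lemma norm_vecMul_le (v : Fin n → ℝ) (A : Matrix (Fin n) (Fin n) ℝ) :
    ‖v ᵥ* A‖ ≤ n * (‖v‖ * ‖A‖) := by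
  rw [vecMul_eq_sum']
  calc ‖∑ i, v i • A i‖ ≤ ∑ i, ‖v i • A i‖ := norm_sum_le _ _
  _ ≤ ∑ _i : Fin n, ‖v‖ * ‖A‖ := by
      refine Finset.sum_le_sum fun i _ => ?_
      rw [norm_smul]
      gcongr
      · exact norm_le_pi_norm v i
      · exact (pi_norm_le_iff_of_nonneg (norm_nonneg A)).2 fun j => by
          simpa [Real.norm_eq_abs] using abs_entry_le_norm A i j
  _ = n * (‖v‖ * ‖A‖) := by simp [Finset.sum_const, mul_comm]

lemma integrableOn_of_bdd {α : Type*} [MeasurableSpace α] {μ : Measure α}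
    {E : Type*} [NormedAddCommGroup E] {f : α → E} {s : Set α}
    (hs : μ s ≠ ∞) (hf : AEStronglyMeasurable f (μ.restrict s)) {C : ℝ}
    (hC : ∀ᵐ x ∂μ.restrict s, ‖f x‖ ≤ C) : IntegrableOn f s μ :=
  ⟨hf, HasFiniteIntegral.restrict_of_bounded C (lt_top_iff_ne_top.2 hs) hC⟩

lemma intervalIntegrable_of_bdd {E : Type*} [NormedAddCommGroup E] {f : ℝ → E} {a b : ℝ}
    (hab : a ≤ b) (hf : AEStronglyMeasurable f (volume.restrict (Ioc a b))) {C : ℝ}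
    (hC : ∀ x ∈ Ioc a b, ‖f x‖ ≤ C) : IntervalIntegrable f volume a b := by
  rw [intervalIntegrable_iff_integrableOn_Ioc_of_le hab]
  exact integrableOn_of_bdd measure_Ioc_lt_top.ne hf
    ((ae_restrict_iff' measurableSet_Ioc).2 (Eventually.of_forall hC))

lemma triangle_swap {E : Type*} [NormedAddCommGroup E] [NormedSpace ℝ E] [CompleteSpace E]
    {a b : ℝ} (hab : a ≤ b) (f : ℝ → ℝ → E) {C : ℝ}
    (hf : AEStronglyMeasurable (uncurry f)
      (volume.restrict {p : ℝ × ℝ | p.1 ∈ Ioo a b ∧ p.2 ∈ Ioo p.1 b}))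
    (hC : ∀ x y, a ≤ x → x ≤ y → y ≤ b → ‖f x y‖ ≤ C) :
    ∫ x in a..b, (∫ y in x..b, f x y) = ∫ y in a..b, (∫ x in a..y, f x y) := by
  set S : Set (ℝ × ℝ) := {p : ℝ × ℝ | p.1 ∈ Ioo a b ∧ p.2 ∈ Ioo p.1 b} with hSdef
  have hS : MeasurableSet S := by
    have : S = ({p : ℝ × ℝ | a < p.1} ∩ {p : ℝ × ℝ | p.1 < p.2}) ∩ {p : ℝ × ℝ | p.2 < b} := by
      ext p; simp only [hSdef, mem_setOf_eq, mem_Ioo, mem_inter_iff]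
      constructor
      · rintro ⟨⟨h1, _⟩, h3, h4⟩; exact ⟨⟨h1, h3⟩, h4⟩
      · rintro ⟨⟨h1, h3⟩, h4⟩; exact ⟨⟨h1, lt_trans h3 h4⟩, h3, h4⟩
    rw [this]
    exact ((measurableSet_lt measurable_const measurable_fst).inter
      (measurableSet_lt measurable_fst measurable_snd)).inter
      (measurableSet_lt measurable_snd measurable_const)
  set G : ℝ × ℝ → E := S.indicator (uncurry f) with hGdef
  have hSsub : S ⊆ Ioo a b ×ˢ Ioo a b := by
    rintro ⟨x, y⟩ ⟨hx, hy⟩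
    exact ⟨hx, lt_trans hx.1 hy.1, hy.2⟩
  have hSfin : volume S < ⊤ := by
    refine (measure_mono hSsub).trans_lt ?_
    rw [MeasureTheory.Measure.volume_eq_prod, Measure.prod_prod]
    exact ENNReal.mul_lt_top measure_Ioo_lt_top measure_Ioo_lt_top
  have hGint : Integrable G volume := by
    rw [hGdef, integrable_indicator_iff hS]
    refine integrableOn_of_bdd (C := C) hSfin.ne hf ?_
    filter_upwards [ae_restrict_mem hS] with p hp
    exact hC p.1 p.2 hp.1.1.le hp.2.1.le hp.2.2.le
  have hL : (∫ x in a..b, (∫ y in x..b, f x y)) = ∫ x, ∫ y, G (x, y) := by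
    rw [intervalIntegral.integral_of_le hab, integral_Ioc_eq_integral_Ioo,
      ← integral_indicator measurableSet_Ioo]
    congr 1
    funext x
    by_cases hx : x ∈ Ioo a b
    · rw [indicator_of_mem hx]
      have : ∀ y, G (x, y) = (Ioo x b).indicator (f x) y := by
        intro y
        by_cases hy : y ∈ Ioo x b
        · rw [indicator_of_mem hy, hGdef, indicator_of_mem (by exact ⟨hx, hy⟩)]; rfl
        · rw [indicator_of_notMem hy, hGdef, indicator_of_notMem (fun h => hy h.2)]
      simp_rw [this]
      rw [integral_indicator measurableSet_Ioo, ← integral_Ioc_eq_integral_Ioo,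
        ← intervalIntegral.integral_of_le hx.2.le]
    · rw [indicator_of_notMem hx]
      have : ∀ y, G (x, y) = 0 := fun y =>
        indicator_of_notMem (fun h => hx h.1) _
      simp_rw [this, integral_zero]
  have hR : (∫ y in a..b, (∫ x in a..y, f x y)) = ∫ y, ∫ x, G (x, y) := by
    rw [intervalIntegral.integral_of_le hab, integral_Ioc_eq_integral_Ioo,
      ← integral_indicator measurableSet_Ioo]
    congr 1
    funext y
    by_cases hy : y ∈ Ioo a b
    · rw [indicator_of_mem hy]
      have : ∀ x, G (x, y) = (Ioo a y).indicator (fun x => f x y) x := by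
        intro x
        by_cases hx : x ∈ Ioo a y
        · rw [indicator_of_mem hx, hGdef,
            indicator_of_mem (by exact ⟨⟨hx.1, lt_trans hx.2 hy.2⟩, hx.2, hy.2⟩)]
          rfl
        · refine (indicator_of_notMem ?_ _).trans (indicator_of_notMem hx _).symm
          intro h
          exact hx ⟨h.1.1, h.2.1⟩
      simp_rw [this]
      rw [integral_indicator measurableSet_Ioo, ← integral_Ioc_eq_integral_Ioo,
        ← intervalIntegral.integral_of_le hy.1.le]
    · rw [indicator_of_notMem hy]
      have : ∀ x, G (x, y) = 0 := by
        intro x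
        refine indicator_of_notMem ?_ _
        intro h
        exact hy ⟨lt_trans h.1.1 h.2.1, h.2.2⟩
      simp_rw [this, integral_zero]
  rw [hL, hR]
  have := integral_integral_swap (f := fun x y => G (x, y))
    (μ := (volume : Measure ℝ)) (ν := (volume : Measure ℝ)) ?_
  · exact this
  · rw [← MeasureTheory.Measure.volume_eq_prod]
    exact hGint


section Kernel

variable {T M : ℝ} {K : ℝ → ℝ → Matrix (Fin n) (Fin n) ℝ}

lemma sm_mul {α : Type*} [MeasurableSpace α] {f g : α → Matrix (Fin n) (Fin n) ℝ}
    (hf : StronglyMeasurable f) (hg : StronglyMeasurable g) :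
    StronglyMeasurable (fun x => f x * g x) :=
  continuous_matMul.comp_stronglyMeasurable (hf.prodMk hg)

lemma smK (hmeas : ∀ i j : Fin n, Measurable (fun p : ℝ × ℝ => K p.1 p.2 i j)) :
    StronglyMeasurable (fun p : ℝ × ℝ => K p.1 p.2) :=
  sm_matrix hmeas

lemma smIter (hmeas : ∀ i j : Fin n, Measurable (fun p : ℝ × ℝ => K p.1 p.2 i j)) :
    ∀ m, StronglyMeasurable (fun p : ℝ × ℝ => iterKernel K m p.1 p.2) := by
  intro m
  induction m with
  | zero => exact smK hmeas
  | succ m ih =>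
    have hF : StronglyMeasurable
        (fun q : (ℝ × ℝ) × ℝ => K q.1.1 q.2 * iterKernel K m q.2 q.1.2) :=
      sm_mul ((smK hmeas).comp_measurable (measurable_fst.fst.prodMk measurable_snd))
        (ih.comp_measurable (measurable_snd.prodMk measurable_fst.snd))
    have key : ∀ (St : Set ((ℝ × ℝ) × ℝ)), MeasurableSet St →
        StronglyMeasurable (fun p : ℝ × ℝ =>
          ∫ r, St.indicator (fun q : (ℝ × ℝ) × ℝ =>
            K q.1.1 q.2 * iterKernel K m q.2 q.1.2) (p, r)) :=
      fun St hSt => (hF.indicator hSt).integral_prod_right'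
    have e1 : ∀ p : ℝ × ℝ, (∫ r in Ioc p.2 p.1, K p.1 r * iterKernel K m r p.2)
        = ∫ r, ({q : (ℝ × ℝ) × ℝ | q.1.2 < q.2 ∧ q.2 ≤ q.1.1}.indicator
            (fun q : (ℝ × ℝ) × ℝ => K q.1.1 q.2 * iterKernel K m q.2 q.1.2)) (p, r) := by
      intro p
      rw [← integral_indicator measurableSet_Ioc]
      rfl
    have e2 : ∀ p : ℝ × ℝ, (∫ r in Ioc p.1 p.2, K p.1 r * iterKernel K m r p.2)
        = ∫ r, ({q : (ℝ × ℝ) × ℝ | q.1.1 < q.2 ∧ q.2 ≤ q.1.2}.indicator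
            (fun q : (ℝ × ℝ) × ℝ => K q.1.1 q.2 * iterKernel K m q.2 q.1.2)) (p, r) := by
      intro p
      rw [← integral_indicator measurableSet_Ioc]
      rfl
    have hset1 : MeasurableSet {q : (ℝ × ℝ) × ℝ | q.1.2 < q.2 ∧ q.2 ≤ q.1.1} :=
      (measurableSet_lt measurable_fst.snd measurable_snd).inter
        (measurableSet_le measurable_snd measurable_fst.fst)
    have hset2 : MeasurableSet {q : (ℝ × ℝ) × ℝ | q.1.1 < q.2 ∧ q.2 ≤ q.1.2} :=
      (measurableSet_lt measurable_fst.fst measurable_snd).inter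
        (measurableSet_le measurable_snd measurable_fst.snd)
    have final : (fun p : ℝ × ℝ => iterKernel K (m + 1) p.1 p.2)
        = fun p : ℝ × ℝ =>
            (∫ r, ({q : (ℝ × ℝ) × ℝ | q.1.2 < q.2 ∧ q.2 ≤ q.1.1}.indicator
              (fun q : (ℝ × ℝ) × ℝ => K q.1.1 q.2 * iterKernel K m q.2 q.1.2)) (p, r))
            - ∫ r, ({q : (ℝ × ℝ) × ℝ | q.1.1 < q.2 ∧ q.2 ≤ q.1.2}.indicator
              (fun q : (ℝ × ℝ) × ℝ => K q.1.1 q.2 * iterKernel K m q.2 q.1.2)) (p, r) := by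
      funext p
      have h0 : iterKernel K (m + 1) p.1 p.2
          = (∫ r in Ioc p.2 p.1, K p.1 r * iterKernel K m r p.2)
            - ∫ r in Ioc p.1 p.2, K p.1 r * iterKernel K m r p.2 := rfl
      rw [h0, e1 p, e2 p]
    rw [final]
    exact (key _ hset1).sub (key _ hset2)

lemma M_nonneg (hT : 0 < T) (hbound : ∀ s t : ℝ, 0 ≤ t → t ≤ s → s ≤ T → ‖K s t‖ ≤ M) :
    0 ≤ M :=
  (norm_nonneg _).trans (hbound 0 0 le_rfl le_rfl hT.le)

lemma iter_bound (hbound : ∀ s t : ℝ, 0 ≤ t → t ≤ s → s ≤ T → ‖K s t‖ ≤ M)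
    (hM : 0 ≤ M) :
    ∀ m, ∀ s t : ℝ, 0 ≤ t → t ≤ s → s ≤ T →
      ‖iterKernel K m s t‖ ≤ M ^ (m + 1) * (s - t) ^ m / m.factorial := by
  intro m
  induction m with
  | zero =>
    intro s t h0 hts hsT
    simpa [iterKernel] using hbound s t h0 hts hsT
  | succ m ih =>
    intro s t h0 hts hsT
    have hst : 0 ≤ s - t := sub_nonneg.2 hts
    have hfac : (0 : ℝ) < m.factorial := by positivity
    have hIg : IntervalIntegrable (fun r => M ^ (m + 2) / m.factorial * (r - t) ^ m)
        volume t s :=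
      Continuous.intervalIntegrable (by continuity) t s
    have hstep : ‖iterKernel K (m + 1) s t‖
        ≤ |∫ r in t..s, M ^ (m + 2) / m.factorial * (r - t) ^ m| := by
      have : iterKernel K (m + 1) s t = ∫ r in t..s, K s r * iterKernel K m r t := rfl
      rw [this]
      refine intervalIntegral.norm_integral_le_abs_of_norm_le ?_ hIg
      rw [uIoc_of_le hts]
      refine (ae_restrict_iff' measurableSet_Ioc).2 (Eventually.of_forall ?_)
      intro r hr
      calc ‖K s r * iterKernel K m r t‖ ≤ ‖K s r‖ * ‖iterKernel K m r t‖ :=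
            Matrix.linfty_opNorm_mul _ _
      _ ≤ M * (M ^ (m + 1) * (r - t) ^ m / m.factorial) := by
          refine mul_le_mul (hbound s r (h0.trans hr.1.le) hr.2 hsT)
            (ih r t h0 hr.1.le (hr.2.trans hsT)) (norm_nonneg _) hM
      _ = M ^ (m + 2) / m.factorial * (r - t) ^ m := by ring
    refine hstep.trans ?_
    rw [intervalIntegral.integral_const_mul,
      intervalIntegral.integral_comp_sub_right (fun x => x ^ m) t,
      integral_pow, sub_self, zero_pow (Nat.succ_ne_zero m), sub_zero]
    rw [abs_of_nonneg (by positivity)]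
    apply le_of_eq
    rw [Nat.factorial_succ]
    push_cast
    rw [div_mul_div_comm, mul_comm ((m.factorial : ℝ)) ((m : ℝ) + 1)]

lemma iter_bound' (hbound : ∀ s t : ℝ, 0 ≤ t → t ≤ s → s ≤ T → ‖K s t‖ ≤ M)
    (hM : 0 ≤ M) (hT0 : 0 ≤ T)
    (m : ℕ) {s t : ℝ} (h0 : 0 ≤ t) (hts : t ≤ s) (hsT : s ≤ T) :
    ‖iterKernel K m s t‖ ≤ M ^ (m + 1) * T ^ m / m.factorial := by
  refine (iter_bound hbound hM m s t h0 hts hsT).trans ?_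
  gcongr
  · linarith

lemma summable_bound (hM : 0 ≤ M) (hT0 : 0 ≤ T) :
    Summable (fun m : ℕ => M ^ (m + 1) * T ^ m / m.factorial) := by
  have : (fun m : ℕ => M ^ (m + 1) * T ^ m / m.factorial)
      = fun m : ℕ => M * ((M * T) ^ m / m.factorial) := by
    funext m; rw [pow_succ, mul_pow]; ring
  rw [this]
  exact (Real.summable_pow_div_factorial (M * T)).mul_left M

lemma summable_iter (hbound : ∀ s t : ℝ, 0 ≤ t → t ≤ s → s ≤ T → ‖K s t‖ ≤ M)
    (hM : 0 ≤ M) (hT0 : 0 ≤ T)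
    {s t : ℝ} (h0 : 0 ≤ t) (hts : t ≤ s) (hsT : s ≤ T) :
    Summable (fun m => iterKernel K m s t) :=
  Summable.of_norm_bounded (summable_bound hM hT0)
    (fun m => iter_bound' hbound hM hT0 m h0 hts hsT)

lemma resolvent_bound (hbound : ∀ s t : ℝ, 0 ≤ t → t ≤ s → s ≤ T → ‖K s t‖ ≤ M)
    (hM : 0 ≤ M) (hT0 : 0 ≤ T)
    {s t : ℝ} (h0 : 0 ≤ t) (hts : t ≤ s) (hsT : s ≤ T) :
    ‖resolventKernel K s t‖ ≤ ∑' m : ℕ, M ^ (m + 1) * T ^ m / m.factorial := by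
  refine (norm_tsum_le_tsum_norm ?_).trans ?_
  · exact (summable_bound hM hT0).of_nonneg_of_le (fun m => norm_nonneg _)
      (fun m => iter_bound' hbound hM hT0 m h0 hts hsT)
  · exact Summable.tsum_le_tsum (fun m => iter_bound' hbound hM hT0 m h0 hts hsT)
      ((summable_bound hM hT0).of_nonneg_of_le (fun m => norm_nonneg _)
        (fun m => iter_bound' hbound hM hT0 m h0 hts hsT))
      (summable_bound hM hT0)

lemma aesm_R {α : Type*} [MeasurableSpace α] {μ : Measure α}
    (hmeas : ∀ i j : Fin n, Measurable (fun p : ℝ × ℝ => K p.1 p.2 i j))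
    (hbound : ∀ s t : ℝ, 0 ≤ t → t ≤ s → s ≤ T → ‖K s t‖ ≤ M)
    (hM : 0 ≤ M) (hT0 : 0 ≤ T)
    {φ ψ : α → ℝ} (hφ : Measurable φ) (hψ : Measurable ψ)
    (htri : ∀ᵐ x ∂μ, 0 ≤ ψ x ∧ ψ x ≤ φ x ∧ φ x ≤ T) :
    AEStronglyMeasurable (fun x => resolventKernel K (φ x) (ψ x)) μ := by
  refine aesm_tsum_of_summable
    (fun m => (smIter hmeas m).comp_measurable (hφ.prodMk hψ)) ?_
  filter_upwards [htri] with x hx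
  exact summable_iter hbound hM hT0 hx.1 hx.2.1 hx.2.2

lemma iiK (hmeas : ∀ i j : Fin n, Measurable (fun p : ℝ × ℝ => K p.1 p.2 i j))
    (hbound : ∀ s t : ℝ, 0 ≤ t → t ≤ s → s ≤ T → ‖K s t‖ ≤ M) (hM : 0 ≤ M) (hT0 : 0 ≤ T) :
    True := trivial

/-- `(K^{*(m+1)}) * K = K^{*(m+2)}` on the triangle. -/
lemma conv_comm (hmeas : ∀ i j : Fin n, Measurable (fun p : ℝ × ℝ => K p.1 p.2 i j))
    (hbound : ∀ s t : ℝ, 0 ≤ t → t ≤ s → s ≤ T → ‖K s t‖ ≤ M) (hM : 0 ≤ M) (hT0 : 0 ≤ T) :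
    ∀ m, ∀ s t : ℝ, 0 ≤ t → t ≤ s → s ≤ T →
      kernelConv (iterKernel K m) K s t = iterKernel K (m + 1) s t := by
  intro m
  induction m with
  | zero => intro s t _ _ _; rfl
  | succ m ih =>
    intro s t h0 hts hsT
    have hconv : kernelConv (iterKernel K (m + 1)) K s t
        = ∫ r in t..s, iterKernel K (m + 1) s r * K r t := rfl
    have step1 : ∀ r ∈ uIcc t s,
        iterKernel K (m + 1) s r * K r t
          = ∫ u in r..s, (K s u * iterKernel K m u r) * K r t := by
      intro r hr
      rw [uIcc_of_le hts] at hr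
      have hint : @IntervalIntegrable _ _ (NormedAddCommGroup.toENormedAddCommMonoid.toENormedAddMonoid) (fun u => K s u * iterKernel K m u r) volume r s := by
        refine intervalIntegrable_of_bdd (hr.2) ?_ (C := M * (M ^ (m + 1) * T ^ m / m.factorial)) ?_
        · exact ((sm_mul ((smK hmeas).comp_measurable (measurable_const.prodMk measurable_id))
            ((smIter hmeas m).comp_measurable
              (measurable_id.prodMk measurable_const))).aestronglyMeasurable)
        · intro u hu
          calc ‖K s u * iterKernel K m u r‖ ≤ ‖K s u‖ * ‖iterKernel K m u r‖ :=
                Matrix.linfty_opNorm_mul _ _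
          _ ≤ M * (M ^ (m + 1) * T ^ m / m.factorial) := by
              refine mul_le_mul (hbound s u (h0.trans (hr.1.trans hu.1.le)) hu.2 hsT)
                (iter_bound' hbound hM hT0 m (h0.trans hr.1) hu.1.le (hu.2.trans hsT))
                (norm_nonneg _) hM
      have h1 : iterKernel K (m + 1) s r = ∫ u in r..s, K s u * iterKernel K m u r := rfl
      have hcomm := (mulRightCLM (K r t)).intervalIntegral_comp_comm hint
      change (∫ x in r..s, (K s x * iterKernel K m x r) * K r t) = (∫ x in r..s, K s x * iterKernel K m x r) * K r t at hcomm
      rw [h1, ← hcomm]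
    rw [hconv, intervalIntegral.integral_congr step1]
    have hswap : (∫ r in t..s, ∫ u in r..s, (K s u * iterKernel K m u r) * K r t)
        = ∫ u in t..s, ∫ r in t..u, (K s u * iterKernel K m u r) * K r t := by
      refine triangle_swap hts _ (C := (M * (M ^ (m + 1) * T ^ m / m.factorial)) * M) ?_ ?_
      · refine StronglyMeasurable.aestronglyMeasurable ?_
        refine sm_mul (sm_mul ?_ ?_) ?_
        · exact (smK hmeas).comp_measurable (measurable_const.prodMk measurable_snd)
        · exact (smIter hmeas m).comp_measurable (measurable_snd.prodMk measurable_fst)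
        · exact (smK hmeas).comp_measurable (measurable_fst.prodMk measurable_const)
      · intro x y htx hxy hys
        calc ‖(K s y * iterKernel K m y x) * K x t‖
            ≤ ‖K s y * iterKernel K m y x‖ * ‖K x t‖ := Matrix.linfty_opNorm_mul _ _
        _ ≤ (M * (M ^ (m + 1) * T ^ m / m.factorial)) * M := by
            refine mul_le_mul ?_ (hbound x t h0 htx (by linarith)) (norm_nonneg _) ?_
            · calc ‖K s y * iterKernel K m y x‖
                  ≤ ‖K s y‖ * ‖iterKernel K m y x‖ := Matrix.linfty_opNorm_mul _ _
              _ ≤ M * (M ^ (m + 1) * T ^ m / m.factorial) :=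
                mul_le_mul (hbound s y (by linarith) (by linarith) hsT)
                  (iter_bound' hbound hM hT0 m (by linarith) hxy (by linarith))
                  (norm_nonneg _) hM
            · positivity
    rw [hswap]
    have step2 : ∀ u ∈ uIcc t s,
        (∫ r in t..u, (K s u * iterKernel K m u r) * K r t)
          = K s u * iterKernel K (m + 1) u t := by
      intro u hu
      rw [uIcc_of_le hts] at hu
      have hint : @IntervalIntegrable _ _ (NormedAddCommGroup.toENormedAddCommMonoid.toENormedAddMonoid) (fun r => iterKernel K m u r * K r t) volume t u := by
        refine intervalIntegrable_of_bdd hu.1 ?_ (C := (M ^ (m + 1) * T ^ m / m.factorial) * M) ?_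
        · exact ((sm_mul ((smIter hmeas m).comp_measurable
            (measurable_const.prodMk measurable_id))
            ((smK hmeas).comp_measurable (measurable_id.prodMk measurable_const)))
            |>.aestronglyMeasurable)
        · intro r hr
          calc ‖iterKernel K m u r * K r t‖ ≤ ‖iterKernel K m u r‖ * ‖K r t‖ :=
                Matrix.linfty_opNorm_mul _ _
          _ ≤ (M ^ (m + 1) * T ^ m / m.factorial) * M :=
              mul_le_mul (iter_bound' hbound hM hT0 m (h0.trans hr.1.le) hr.2
                  (hu.2.trans hsT))
                (hbound r t h0 hr.1.le ((hr.2.trans hu.2).trans hsT)) (norm_nonneg _)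
                (by positivity)
      have assoc : ∀ r, (K s u * iterKernel K m u r) * K r t
          = K s u * (iterKernel K m u r * K r t) := fun r => mul_assoc _ _ _
      simp only [assoc]
      have hcomm := (mulLeftCLM (K s u)).intervalIntegral_comp_comm hint
      change (∫ x in t..u, K s u * (iterKernel K m u x * K x t)) = K s u * (∫ x in t..u, iterKernel K m u x * K x t) at hcomm
      rw [hcomm]
      congr 1
      have : (∫ r in t..u, iterKernel K m u r * K r t) = kernelConv (iterKernel K m) K u t := rfl
      rw [this, ih u t h0 hu.1 (hu.2.trans hsT)]
    rw [intervalIntegral.integral_congr step2]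
    rfl

lemma resolvent_eq (hmeas : ∀ i j : Fin n, Measurable (fun p : ℝ × ℝ => K p.1 p.2 i j))
    (hbound : ∀ s t : ℝ, 0 ≤ t → t ≤ s → s ≤ T → ‖K s t‖ ≤ M) (hM : 0 ≤ M) (hT0 : 0 ≤ T)
    {t r : ℝ} (h0 : 0 ≤ t) (htr : t ≤ r) (hrT : r ≤ T) :
    (∫ s in t..r, resolventKernel K r s * K s t) = resolventKernel K r t - K r t := by
  have hcongr : ∀ s ∈ uIcc t r,
      resolventKernel K r s * K s t = ∑' m : ℕ, iterKernel K m r s * K s t := by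
    intro s hs
    rw [uIcc_of_le htr] at hs
    have hsum := summable_iter hbound hM hT0 (h0.trans hs.1) hs.2 hrT
    have := (mulRightCLM (K s t)).map_tsum hsum
    simp only [mulRightCLM_apply] at this
    exact this
  rw [intervalIntegral.integral_congr hcongr, intervalIntegral.integral_of_le htr]
  have htsum : (∫ s in Ioc t r, ∑' m : ℕ, iterKernel K m r s * K s t)
      = ∑' m : ℕ, ∫ s in Ioc t r, iterKernel K m r s * K s t := by
    refine integral_tsum (fun m => ?_) ?_
    · exact (sm_mul ((smIter hmeas m).comp_measurable
        (measurable_const.prodMk measurable_id))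
        ((smK hmeas).comp_measurable (measurable_id.prodMk measurable_const)))
        |>.aestronglyMeasurable
    · have hd : ∀ m : ℕ, (0 : ℝ) ≤ M ^ (m + 1) * T ^ m / m.factorial * M := by
        intro m; positivity
      have hterm : ∀ m : ℕ, (∫⁻ s in Ioc t r, ‖iterKernel K m r s * K s t‖₊)
          ≤ ENNReal.ofReal ((M ^ (m + 1) * T ^ m / m.factorial * M) * T) := by
        intro m
        have hb : ∀ᵐ s ∂(volume.restrict (Ioc t r)),
            (‖iterKernel K m r s * K s t‖₊ : ℝ≥0∞)
              ≤ ENNReal.ofReal (M ^ (m + 1) * T ^ m / m.factorial * M) := by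
          refine (ae_restrict_iff' measurableSet_Ioc).2 (Eventually.of_forall fun s hs => ?_)
          rw [← enorm_eq_nnnorm, ← ofReal_norm]
          refine ENNReal.ofReal_le_ofReal ?_
          calc ‖iterKernel K m r s * K s t‖ ≤ ‖iterKernel K m r s‖ * ‖K s t‖ :=
                Matrix.linfty_opNorm_mul _ _
          _ ≤ M ^ (m + 1) * T ^ m / m.factorial * M :=
              mul_le_mul (iter_bound' hbound hM hT0 m (h0.trans hs.1.le) hs.2 hrT)
                (hbound s t h0 hs.1.le (hs.2.trans hrT)) (norm_nonneg _) (by positivity)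
        calc (∫⁻ s in Ioc t r, ‖iterKernel K m r s * K s t‖₊)
            ≤ ∫⁻ _ in Ioc t r, ENNReal.ofReal (M ^ (m + 1) * T ^ m / m.factorial * M) :=
              lintegral_mono_ae hb
        _ = ENNReal.ofReal (M ^ (m + 1) * T ^ m / m.factorial * M) * volume (Ioc t r) := by
            rw [lintegral_const, Measure.restrict_apply_univ]
        _ ≤ ENNReal.ofReal (M ^ (m + 1) * T ^ m / m.factorial * M) * ENNReal.ofReal T := by
            gcongr
            rw [Real.volume_Ioc]
            exact ENNReal.ofReal_le_ofReal (by linarith)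
        _ = ENNReal.ofReal ((M ^ (m + 1) * T ^ m / m.factorial * M) * T) :=
            (ENNReal.ofReal_mul (hd m)).symm
      have hsummable : Summable (fun m : ℕ => (M ^ (m + 1) * T ^ m / m.factorial * M) * T) :=
        ((summable_bound hM hT0).mul_right M).mul_right T
      refine ne_top_of_le_ne_top ?_ (ENNReal.tsum_le_tsum hterm)
      rw [← ENNReal.ofReal_tsum_of_nonneg (fun m => by positivity) hsummable]
      exact ENNReal.ofReal_ne_top
  rw [htsum]
  have hterm : ∀ m : ℕ, (∫ s in Ioc t r, iterKernel K m r s * K s t)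
      = iterKernel K (m + 1) r t := by
    intro m
    rw [← intervalIntegral.integral_of_le htr]
    exact conv_comm hmeas hbound hM hT0 m r t h0 htr hrT
  rw [tsum_congr hterm]
  have hs := summable_iter hbound hM hT0 h0 htr hrT
  have hshift := (Summable.tsum_eq_zero_add hs).symm
  have : resolventKernel K r t = iterKernel K 0 r t + ∑' m, iterKernel K (m + 1) r t := by
    rw [resolventKernel, ← hshift]
  rw [this]
  have h0K : iterKernel K 0 r t = K r t := rfl
  rw [h0K]
  abel

lemma measurableSet_tri (a b : ℝ) :
    MeasurableSet {p : ℝ × ℝ | p.1 ∈ Ioo a b ∧ p.2 ∈ Ioo p.1 b} := by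
  have : {p : ℝ × ℝ | p.1 ∈ Ioo a b ∧ p.2 ∈ Ioo p.1 b}
      = ({p : ℝ × ℝ | a < p.1} ∩ {p : ℝ × ℝ | p.1 < p.2}) ∩ {p : ℝ × ℝ | p.2 < b} := by
    ext p; simp only [mem_setOf_eq, mem_Ioo, mem_inter_iff]
    constructor
    · rintro ⟨⟨h1, _⟩, h3, h4⟩; exact ⟨⟨h1, h3⟩, h4⟩
    · rintro ⟨⟨h1, h3⟩, h4⟩; exact ⟨⟨h1, lt_trans h3 h4⟩, h3, h4⟩
  rw [this]
  exact ((measurableSet_lt measurable_const measurable_fst).inter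
    (measurableSet_lt measurable_fst measurable_snd)).inter
    (measurableSet_lt measurable_snd measurable_const)

end Kernel

end RDAux


set_option maxHeartbeats 2000000

/-- **Duality of the resolvent (equation (4.23)).** If `R` is the resolvent kernel of `K`, then
for every bounded measurable `η`, the function `y(t)ᵀ = η(t)ᵀ + ∫_t^T η(s)ᵀ R(s,t) ds`
(row-vector–matrix products) satisfies the dual backward Volterra equation
`y(t)ᵀ = η(t)ᵀ + ∫_t^T y(s)ᵀ K(s,t) ds` for all `t ∈ [0,T]`. -/
theorem resolvent_duality
    (n : ℕ) (T : ℝ) (hT : 0 < T)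
    (K : ℝ → ℝ → Matrix (Fin n) (Fin n) ℝ)
    (hmeas : ∀ i j : Fin n, Measurable (fun p : ℝ × ℝ => K p.1 p.2 i j))
    (M : ℝ) (hbound : ∀ s t : ℝ, 0 ≤ t → t ≤ s → s ≤ T → ‖K s t‖ ≤ M)
    (η : ℝ → (Fin n → ℝ)) (hηmeas : Measurable η)
    (hηbdd : ∃ C : ℝ, ∀ t ∈ Icc 0 T, ‖η t‖ ≤ C) :
    ∀ t ∈ Icc 0 T,
      (η t + ∫ s in t..T, Matrix.vecMul (η s) (resolventKernel K s t)) =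
        η t + ∫ s in t..T,
          Matrix.vecMul
            (η s + ∫ r in s..T, Matrix.vecMul (η r) (resolventKernel K r s))
            (K s t) := by
  classical
  obtain ⟨C, hC⟩ := hηbdd
  have hM : 0 ≤ M := RDAux.M_nonneg hT hbound
  have hT0 : 0 ≤ T := hT.le
  have hC0 : 0 ≤ C := (norm_nonneg _).trans (hC 0 ⟨le_rfl, hT0⟩)
  set Csum : ℝ := ∑' m : ℕ, M ^ (m + 1) * T ^ m / m.factorial with hCsumdef
  have hCsum0 : 0 ≤ Csum := tsum_nonneg fun m => by positivity
  have hηsm : MeasureTheory.StronglyMeasurable η := hηmeas.stronglyMeasurable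
  have hηb : ∀ s : ℝ, 0 ≤ s → s ≤ T → ‖η s‖ ≤ C := fun s h1 h2 => hC s ⟨h1, h2⟩
  -- the continuous composition maps
  have hcont1 : Continuous fun q : (Fin n → ℝ) × Matrix (Fin n) (Fin n) ℝ => q.1 ᵥ* q.2 :=
    RDAux.continuous_vecMul
  intro t ht
  set g : ℝ → Fin n → ℝ :=
    fun s => ∫ r in s..T, (η r) ᵥ* (resolventKernel K r s) with hgdef
  -- strong measurability of K slices
  have hKslice : ∀ c : ℝ, MeasureTheory.StronglyMeasurable (fun s : ℝ => K s c) :=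
    fun c => (RDAux.smK hmeas).comp_measurable (measurable_id.prodMk measurable_const)
  -- (1) integrability of s ↦ η s ᵥ* R s t on [t,T]
  have hRslice : MeasureTheory.AEStronglyMeasurable (fun s : ℝ => resolventKernel K s t)
      (MeasureTheory.volume.restrict (Ioc t T)) := by
    refine RDAux.aesm_R hmeas hbound hM hT0 measurable_id measurable_const ?_
    filter_upwards [MeasureTheory.ae_restrict_mem measurableSet_Ioc] with s hs
    exact ⟨ht.1, hs.1.le, hs.2⟩
  have II1 : IntervalIntegrable (fun s => (η s) ᵥ* (resolventKernel K s t))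
      MeasureTheory.volume t T := by
    refine RDAux.intervalIntegrable_of_bdd ht.2
      (hcont1.comp_aestronglyMeasurable
        (hηsm.aestronglyMeasurable.prodMk hRslice)) (C := n * (C * Csum)) ?_
    intro s hs
    refine (RDAux.norm_vecMul_le _ _).trans ?_
    gcongr
    · exact hηb s (ht.1.trans hs.1.le) hs.2
    · exact RDAux.resolvent_bound hbound hM hT0 ht.1 hs.1.le hs.2
  -- (2) integrability of s ↦ η s ᵥ* K s t on [t,T]
  have II2 : IntervalIntegrable (fun s => (η s) ᵥ* (K s t)) MeasureTheory.volume t T := by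
    refine RDAux.intervalIntegrable_of_bdd ht.2
      ((hcont1.comp_stronglyMeasurable
        (hηsm.prodMk (hKslice t))).aestronglyMeasurable) (C := n * (C * M)) ?_
    intro s hs
    refine (RDAux.norm_vecMul_le _ _).trans ?_
    gcongr
    · exact hηb s (ht.1.trans hs.1.le) hs.2
    · exact hbound s t ht.1 hs.1.le hs.2
  -- (4) inner integrals: integrability for each s ∈ [t,T]
  have IIg : ∀ s ∈ Icc t T,
      IntervalIntegrable (fun r => (η r) ᵥ* (resolventKernel K r s))
        MeasureTheory.volume s T := by
    intro s hs
    have h0s : 0 ≤ s := ht.1.trans hs.1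
    have hRs : MeasureTheory.AEStronglyMeasurable (fun r : ℝ => resolventKernel K r s)
        (MeasureTheory.volume.restrict (Ioc s T)) := by
      refine RDAux.aesm_R hmeas hbound hM hT0 measurable_id measurable_const ?_
      filter_upwards [MeasureTheory.ae_restrict_mem measurableSet_Ioc] with r hr
      exact ⟨h0s, hr.1.le, hr.2⟩
    refine RDAux.intervalIntegrable_of_bdd hs.2
      (hcont1.comp_aestronglyMeasurable
        (hηsm.aestronglyMeasurable.prodMk hRs)) (C := n * (C * Csum)) ?_
    intro r hr
    refine (RDAux.norm_vecMul_le _ _).trans ?_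
    gcongr
    · exact hηb r (h0s.trans hr.1.le) hr.2
    · exact RDAux.resolvent_bound hbound hM hT0 h0s hr.1.le hr.2
  -- bound on g
  have hg_bd : ∀ s ∈ Icc t T, ‖g s‖ ≤ n * (C * Csum) * T := by
    intro s hs
    have h0s : 0 ≤ s := ht.1.trans hs.1
    have : ‖g s‖ ≤ n * (C * Csum) * |T - s| := by
      refine intervalIntegral.norm_integral_le_of_norm_le_const ?_
      intro r hr
      rw [uIoc_of_le hs.2] at hr
      refine (RDAux.norm_vecMul_le _ _).trans ?_
      gcongr
      · exact hηb r (h0s.trans hr.1.le) hr.2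
      · exact RDAux.resolvent_bound hbound hM hT0 h0s hr.1.le hr.2
    refine this.trans ?_
    have : |T - s| ≤ T := by rw [abs_of_nonneg (by linarith [hs.2])]; linarith
    have hnn : (0 : ℝ) ≤ n * (C * Csum) := by positivity
    exact mul_le_mul_of_nonneg_left this hnn
  -- a.e. strong measurability of g on (t, T]
  set S2 : Set (ℝ × ℝ) := {p : ℝ × ℝ | p.1 ∈ Ioo t T ∧ p.2 ∈ Ioo p.1 T} with hS2def
  have hS2 : MeasurableSet S2 := RDAux.measurableSet_tri t T
  have hFin : MeasureTheory.AEStronglyMeasurable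
      (fun p : ℝ × ℝ => (η p.2) ᵥ* (resolventKernel K p.2 p.1))
      (MeasureTheory.volume.restrict S2) := by
    have hRin : MeasureTheory.AEStronglyMeasurable
        (fun p : ℝ × ℝ => resolventKernel K p.2 p.1)
        (MeasureTheory.volume.restrict S2) := by
      refine RDAux.aesm_R hmeas hbound hM hT0 measurable_snd measurable_fst ?_
      filter_upwards [MeasureTheory.ae_restrict_mem hS2] with p hp
      exact ⟨ht.1.trans hp.1.1.le, hp.2.1.le, hp.2.2.le⟩
    exact hcont1.comp_aestronglyMeasurable
      ((hηsm.comp_measurable measurable_snd).aestronglyMeasurable.prodMk hRin)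
  have hgae : MeasureTheory.AEStronglyMeasurable g
      (MeasureTheory.volume.restrict (Ioc t T)) := by
    set G2 : ℝ × ℝ → (Fin n → ℝ) :=
      S2.indicator (fun p : ℝ × ℝ => (η p.2) ᵥ* (resolventKernel K p.2 p.1)) with hG2def
    have hG2 : MeasureTheory.AEStronglyMeasurable G2 MeasureTheory.volume :=
      (aestronglyMeasurable_indicator_iff hS2).2 hFin
    have hG2' : MeasureTheory.AEStronglyMeasurable
        (fun s : ℝ => ∫ r, G2 (s, r)) MeasureTheory.volume := by
      have : MeasureTheory.AEStronglyMeasurable G2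
          ((MeasureTheory.volume : MeasureTheory.Measure ℝ).prod
            (MeasureTheory.volume : MeasureTheory.Measure ℝ)) := by
        rwa [← MeasureTheory.Measure.volume_eq_prod]
      exact this.integral_prod_right'
    refine hG2'.restrict.congr ?_
    filter_upwards [MeasureTheory.ae_restrict_mem measurableSet_Ioc] with s hs
    by_cases hsT : s < T
    · have hsmem : s ∈ Ioo t T := ⟨hs.1, hsT⟩
      have hind : ∀ r, G2 (s, r)
          = (Ioo s T).indicator (fun r => (η r) ᵥ* (resolventKernel K r s)) r := by
        intro r
        by_cases hr : r ∈ Ioo s T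
        · rw [indicator_of_mem hr, hG2def, indicator_of_mem]
          exact ⟨hsmem, hr⟩
        · rw [indicator_of_notMem hr, hG2def, indicator_of_notMem]
          exact fun hc => hr hc.2
      calc (∫ r, G2 (s, r))
          = ∫ r, (Ioo s T).indicator (fun r => (η r) ᵥ* (resolventKernel K r s)) r := by
            simp_rw [hind]
      _ = ∫ r in Ioo s T, (η r) ᵥ* (resolventKernel K r s) :=
            MeasureTheory.integral_indicator measurableSet_Ioo
      _ = ∫ r in Ioc s T, (η r) ᵥ* (resolventKernel K r s) :=
            (MeasureTheory.integral_Ioc_eq_integral_Ioo).symm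
      _ = g s := (intervalIntegral.integral_of_le hsT.le).symm
    · have hsT' : s = T := le_antisymm hs.2 (not_lt.1 hsT)
      have hind : ∀ r, G2 (s, r) = 0 := by
        intro r
        refine indicator_of_notMem ?_ _
        rintro ⟨h1, _⟩
        exact absurd (hsT'.symm ▸ h1.2) (lt_irrefl T)
      simp_rw [hind]
      rw [MeasureTheory.integral_zero, hgdef]
      simp [hsT']
  -- (3) integrability of s ↦ g s ᵥ* K s t on [t,T]
  have II3 : IntervalIntegrable (fun s => (g s) ᵥ* (K s t)) MeasureTheory.volume t T := by
    refine RDAux.intervalIntegrable_of_bdd ht.2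
      (hcont1.comp_aestronglyMeasurable
        (hgae.prodMk (hKslice t).aestronglyMeasurable.restrict))
      (C := n * ((n * (C * Csum) * T) * M)) ?_
    intro s hs
    refine (RDAux.norm_vecMul_le _ _).trans ?_
    gcongr
    · exact hg_bd s ⟨hs.1.le, hs.2⟩
    · exact hbound s t ht.1 hs.1.le hs.2
  -- main computation
  have key : (∫ s in t..T, (η s) ᵥ* (resolventKernel K s t))
      = ∫ s in t..T, (η s + g s) ᵥ* (K s t) := by
    have hsplit : (∫ s in t..T, (η s + g s) ᵥ* (K s t))
        = (∫ s in t..T, (η s) ᵥ* (K s t)) + ∫ s in t..T, (g s) ᵥ* (K s t) := by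
      rw [← intervalIntegral.integral_add II2 II3]
      congr 1
      funext s
      rw [Matrix.add_vecMul]
    -- rewrite the second integral
    have stepg : ∀ s ∈ uIcc t T,
        (g s) ᵥ* (K s t)
          = ∫ r in s..T, (η r) ᵥ* (resolventKernel K r s * K s t) := by
      intro s hs
      rw [uIcc_of_le ht.2] at hs
      have hcomm := (RDAux.vecMulRightCLM (K s t)).intervalIntegral_comp_comm (IIg s hs)
      simp only [RDAux.vecMulRightCLM_apply] at hcomm
      rw [hgdef]
      rw [← hcomm]
      congr 1
      funext r
      rw [Matrix.vecMul_vecMul]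
    have hswap : (∫ s in t..T, ∫ r in s..T, (η r) ᵥ* (resolventKernel K r s * K s t))
        = ∫ r in t..T, ∫ s in t..r, (η r) ᵥ* (resolventKernel K r s * K s t) := by
      refine RDAux.triangle_swap ht.2 _ (C := n * (C * (Csum * M))) ?_ ?_
      · have hKin : MeasureTheory.StronglyMeasurable (fun p : ℝ × ℝ => K p.1 t) :=
          (RDAux.smK hmeas).comp_measurable (measurable_fst.prodMk measurable_const)
        have hRin : MeasureTheory.AEStronglyMeasurable
            (fun p : ℝ × ℝ => resolventKernel K p.2 p.1)
            (MeasureTheory.volume.restrict S2) := by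
          refine RDAux.aesm_R hmeas hbound hM hT0 measurable_snd measurable_fst ?_
          filter_upwards [MeasureTheory.ae_restrict_mem hS2] with p hp
          exact ⟨ht.1.trans hp.1.1.le, hp.2.1.le, hp.2.2.le⟩
        have hprod : MeasureTheory.AEStronglyMeasurable
            (fun p : ℝ × ℝ => resolventKernel K p.2 p.1 * K p.1 t)
            (MeasureTheory.volume.restrict S2) :=
          RDAux.continuous_matMul.comp_aestronglyMeasurable
            (hRin.prodMk hKin.aestronglyMeasurable.restrict)
        exact hcont1.comp_aestronglyMeasurable
          ((hηsm.comp_measurable measurable_snd).aestronglyMeasurable.prodMk hprod)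
      · intro x y htx hxy hyT
        refine (RDAux.norm_vecMul_le _ _).trans ?_
        have h0x : 0 ≤ x := ht.1.trans htx
        gcongr
        · exact hηb y (h0x.trans hxy) hyT
        · calc ‖resolventKernel K y x * K x t‖
              ≤ ‖resolventKernel K y x‖ * ‖K x t‖ := Matrix.linfty_opNorm_mul _ _
          _ ≤ Csum * M :=
              mul_le_mul (RDAux.resolvent_bound hbound hM hT0 h0x hxy hyT)
                (hbound x t ht.1 htx (hxy.trans hyT)) (norm_nonneg _) hCsum0
    have step2 : ∀ r ∈ uIcc t T,
        (∫ s in t..r, (η r) ᵥ* (resolventKernel K r s * K s t))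
          = (η r) ᵥ* (resolventKernel K r t) - (η r) ᵥ* (K r t) := by
      intro r hr
      rw [uIcc_of_le ht.2] at hr
      have IIin : @IntervalIntegrable _ _ (NormedAddCommGroup.toENormedAddCommMonoid.toENormedAddMonoid) (fun s => resolventKernel K r s * K s t)
          MeasureTheory.volume t r := by
        have hRin : MeasureTheory.AEStronglyMeasurable
            (fun s : ℝ => resolventKernel K r s)
            (MeasureTheory.volume.restrict (Ioc t r)) := by
          refine RDAux.aesm_R hmeas hbound hM hT0 measurable_const measurable_id ?_
          filter_upwards [MeasureTheory.ae_restrict_mem measurableSet_Ioc] with s hs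
          exact ⟨ht.1.trans hs.1.le, hs.2, hr.2⟩
        refine RDAux.intervalIntegrable_of_bdd hr.1
          (RDAux.continuous_matMul.comp_aestronglyMeasurable
            (hRin.prodMk (hKslice t).aestronglyMeasurable.restrict))
          (C := Csum * M) ?_
        intro s hs
        calc ‖resolventKernel K r s * K s t‖
            ≤ ‖resolventKernel K r s‖ * ‖K s t‖ := Matrix.linfty_opNorm_mul _ _
        _ ≤ Csum * M :=
            mul_le_mul
              (RDAux.resolvent_bound hbound hM hT0 (ht.1.trans hs.1.le) hs.2 hr.2)
              (hbound s t ht.1 hs.1.le (hs.2.trans hr.2)) (norm_nonneg _) hCsum0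
      have hcomm := (RDAux.vecMulCLM (η r)).intervalIntegral_comp_comm IIin
      change (∫ x in t..r, (η r) ᵥ* (resolventKernel K r x * K x t)) = (η r) ᵥ* (∫ x in t..r, resolventKernel K r x * K x t) at hcomm
      rw [hcomm, RDAux.resolvent_eq hmeas hbound hM hT0 ht.1 hr.1 hr.2,
        Matrix.vecMul_sub]
    have hsub : (∫ r in t..T,
          ((η r) ᵥ* (resolventKernel K r t) - (η r) ᵥ* (K r t)))
        = (∫ r in t..T, (η r) ᵥ* (resolventKernel K r t))
          - ∫ r in t..T, (η r) ᵥ* (K r t) :=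
      intervalIntegral.integral_sub II1 II2
    rw [hsplit, intervalIntegral.integral_congr stepg, hswap,
      intervalIntegral.integral_congr step2, hsub]
    abel
  rw [key]
end

section
/- Let T > 0, let 0 < τ₁ < ⋯ < τ_N < T, let K : ℝ → ℝ → Matrix (Fin n) (Fin n) ℝ be measurable and bounded with K(s,t) = 0 for t ≥ s, and let L : ℝ → Fin N → Matrix (Fin n) (Fin n) ℝ be measurable and bounded with L(s, i) = 0 whenever s ≤ τ_i. Write L̂(i,j) := L(τ_i, j) and let P(j,i) and Λ(σ) be the increasing paths and path weights built from L̂ (Λ(σ) := L̂(i,k_α)·⋯·L̂(k₁,j) for σ = (j < k₁ < ⋯ < k_α < i), Λ = 1 on trivial paths). Let h : [0,T] → ℝⁿ be bounded measurable and define 𝐊(s,t) := K(s,t) + ∑_{i=1}^N ∑_{j=1}^N ∑_{σ ∈ P(j,i)} L(s,i)·Λ(σ)·K(τ_j,t) and 𝐡(s) := h(s) + ∑_{i=1}^N ∑_{j=1}^N ∑_{σ ∈ P(j,i)} L(s,i)·Λ(σ)·h(τ_j). Then a bounded measurable function x : [0,T] → ℝⁿ that is left-continuous at each τ_i satisfies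 the impulsive linear Volterra equation x(s) = h(s) + ∫₀^s K(s,t)x(t)dt + ∑_{i : τ_i < s} L(s,i)·x(τ_i) for all s ∈ [0,T] if and only if it satisfies the non-impulsive equation x(s) = 𝐡(s) + ∫₀^s 𝐊(s,t)x(t)dt for all s ∈ [0,T]. -/
open Set Filter

attribute [local instance] Matrix.linftyOpNormedAddCommGroup Matrix.linftyOpNormedSpace

/-- The weight of a chain `[k₀, k₁, …, k_r]` of indices: the product
`L(k_r, k_{r−1}) · ⋯ · L(k₁, k₀)` (the identity matrix for chains with at most one vertex). -/
def chainWeight {ι : Type*} {n : ℕ} (L : ι → ι → Matrix (Fin n) (Fin n) ℝ) :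
    List ι → Matrix (Fin n) (Fin n) ℝ
  | [] => 1
  | [_] => 1
  | a :: b :: rest => chainWeight L (b :: rest) * L b a

/-- The set of increasing paths `σ = (j = k₀ < k₁ < ⋯ < k_α < k_{α+1} = i)` from `j` to `i`,
encoded as the finset of vertices of the path; it is empty when `i < j` and consists only of
the trivial path when `j = i`. -/
def incPaths {N : ℕ} (j i : Fin N) : Finset (Finset (Fin N)) :=
  Finset.univ.filter (fun σ => j ∈ σ ∧ i ∈ σ ∧ ∀ k ∈ σ, j ≤ k ∧ k ≤ i)

/-- The weight `Λ(σ) = L̂(i,k_α)·L̂(k_α,k_{α−1})·⋯·L̂(k₁,j)` of an increasing path. -/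
def pathWeight {N n : ℕ} (L : Fin N → Fin N → Matrix (Fin n) (Fin n) ℝ)
    (σ : Finset (Fin N)) : Matrix (Fin n) (Fin n) ℝ :=
  chainWeight L (σ.sort (· ≤ ·))

namespace Aux4p2

variable {N n : ℕ}

lemma mem_incPaths {j i : Fin N} {σ : Finset (Fin N)} :
    σ ∈ incPaths j i ↔ j ∈ σ ∧ i ∈ σ ∧ ∀ k ∈ σ, j ≤ k ∧ k ≤ i := by
  simp [incPaths]

lemma incPaths_self (i : Fin N) : incPaths i i = {({i} : Finset (Fin N))} := by
  ext σ
  simp only [mem_incPaths, Finset.mem_singleton]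
  constructor
  · rintro ⟨hi, -, hall⟩
    apply Finset.eq_singleton_iff_unique_mem.2
    exact ⟨hi, fun k hk => le_antisymm (hall k hk).2 (hall k hk).1⟩
  · rintro rfl
    simp

lemma incPaths_empty {j i : Fin N} (hij : i < j) : incPaths j i = ∅ := by
  ext σ
  simp only [mem_incPaths, Finset.notMem_empty, iff_false]
  rintro ⟨hj, -, hall⟩
  exact absurd (hall j hj).2 (not_le.2 hij)

lemma pathWeight_singleton (L : Fin N → Fin N → Matrix (Fin n) (Fin n) ℝ) (i : Fin N) :
    pathWeight L ({i} : Finset (Fin N)) = 1 := by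
  simp [pathWeight, chainWeight]

lemma pathWeight_insert (L : Fin N → Fin N → Matrix (Fin n) (Fin n) ℝ)
    (σ : Finset (Fin N)) (j k : Fin N) (hk : k ∈ σ) (hmin : ∀ m ∈ σ, k ≤ m)
    (hj : ∀ m ∈ σ, j < m) :
    pathWeight L (insert j σ) = pathWeight L σ * L k j := by
  have hjσ : j ∉ σ := fun hs => lt_irrefl j (hj j hs)
  have h1 : (insert j σ).sort (· ≤ ·) = j :: σ.sort (· ≤ ·) :=
    Finset.sort_insert _ (fun b hb => (hj b hb).le) hjσ
  have hkσ : k ∉ σ.erase k := fun hs => (Finset.ne_of_mem_erase hs) rfl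
  have h2 : σ.sort (· ≤ ·) = k :: (σ.erase k).sort (· ≤ ·) := by
    conv_lhs => rw [← Finset.insert_erase hk]
    exact Finset.sort_insert _ (fun b hb => hmin b (Finset.mem_of_mem_erase hb)) hkσ
  rw [pathWeight, h1, h2, chainWeight, ← h2, pathWeight]

/-- Removing the bottom vertex of an increasing path: recursion for the total weight. -/
lemma weightSum_rec (L : Fin N → Fin N → Matrix (Fin n) (Fin n) ℝ)
    (hL : ∀ k j : Fin N, k ≤ j → L k j = 0) (j i : Fin N) :
    ∑ σ ∈ incPaths j i, pathWeight L σ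
      = (if j = i then 1 else 0)
        + ∑ k : Fin N, (∑ σ ∈ incPaths k i, pathWeight L σ) * L k j := by
  rcases lt_trichotomy i j with hij | rfl | hij
  · rw [incPaths_empty hij, Finset.sum_empty]
    rw [if_neg (by exact fun hh => lt_irrefl i (hh ▸ hij)), zero_add]
    refine (Finset.sum_eq_zero ?_).symm
    intro k _
    rcases le_or_gt k j with hkj | hjk
    · rw [hL k j hkj, mul_zero]
    · rw [incPaths_empty (lt_trans hij hjk), Finset.sum_empty, zero_mul]
  · rw [incPaths_self, if_pos rfl, Finset.sum_singleton, pathWeight_singleton]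
    rw [Finset.sum_eq_zero, add_zero]
    intro k _
    rcases le_or_gt k i with hki | hik
    · rw [hL k i hki, mul_zero]
    · rw [incPaths_empty hik, Finset.sum_empty, zero_mul]
  · -- j < i
    rw [if_neg (by exact fun hh => lt_irrefl i (hh ▸ hij)), zero_add]
    have hstep : ∀ k : Fin N, (∑ σ ∈ incPaths k i, pathWeight L σ) * L k j
        = ∑ σ ∈ incPaths k i, pathWeight L σ * L k j := fun k => Finset.sum_mul _ _ _
    simp_rw [hstep]
    rw [show (∑ k : Fin N, ∑ σ ∈ incPaths k i, pathWeight L σ * L k j)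
        = ∑ k ∈ Finset.Ioi j, ∑ σ ∈ incPaths k i, pathWeight L σ * L k j from
      (Finset.sum_subset (Finset.subset_univ _) (by
        intro k _ hk
        rw [Finset.mem_Ioi, not_lt] at hk
        rw [Finset.sum_eq_zero]
        intro σ _
        rw [hL k j hk, mul_zero])).symm]
    rw [Finset.sum_sigma' (Finset.Ioi j) (fun k => incPaths k i)
      (fun k σ => pathWeight L σ * L k j)]
    refine Finset.sum_bij' (fun σ hσ => ⟨(σ.erase j).min' ?_, σ.erase j⟩)
      (fun p _ => insert j p.2) ?_ ?_ ?_ ?_ ?_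
    · rw [mem_incPaths] at hσ
      exact ⟨i, Finset.mem_erase.2 ⟨fun hh => lt_irrefl i (hh ▸ hij), hσ.2.1⟩⟩
    · -- forward membership
      intro σ hσ
      rw [mem_incPaths] at hσ
      obtain ⟨hjσ, hiσ, hall⟩ := hσ
      have hne : (σ.erase j).Nonempty := ⟨i, Finset.mem_erase.2 ⟨fun hh => lt_irrefl i (hh ▸ hij), hiσ⟩⟩
      have hmin := Finset.min'_mem (σ.erase j) hne
      simp only [Finset.mem_sigma, Finset.mem_Ioi, mem_incPaths]
      refine ⟨?_, hmin, Finset.mem_erase.2 ⟨fun hh => lt_irrefl i (hh ▸ hij), hiσ⟩, ?_⟩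
      · rcases Finset.mem_erase.1 hmin with ⟨hne', hmem⟩
        exact lt_of_le_of_ne (hall _ hmem).1 (Ne.symm hne')
      · intro m hm
        exact ⟨Finset.min'_le _ _ hm, (hall m (Finset.mem_of_mem_erase hm)).2⟩
    · -- backward membership
      rintro ⟨k, σ'⟩ hp
      rw [Finset.mem_sigma, Finset.mem_Ioi, mem_incPaths] at hp
      obtain ⟨hjk, hkσ, hiσ, hall⟩ := hp
      rw [mem_incPaths]
      refine ⟨Finset.mem_insert_self _ _, Finset.mem_insert_of_mem hiσ, ?_⟩
      intro m hm
      rcases Finset.mem_insert.1 hm with rfl | hm'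
      · exact ⟨le_refl _, hij.le⟩
      · exact ⟨le_of_lt (lt_of_lt_of_le hjk (hall m hm').1), (hall m hm').2⟩
    · -- left inverse: insert j (σ.erase j) = σ
      intro σ hσ
      rw [mem_incPaths] at hσ
      exact Finset.insert_erase hσ.1
    · -- right inverse
      rintro ⟨k, σ'⟩ hp
      rw [Finset.mem_sigma, Finset.mem_Ioi, mem_incPaths] at hp
      obtain ⟨hjk, hkσ, hiσ, hall⟩ := hp
      have hjσ' : j ∉ σ' := fun hs => absurd (hall j hs).1 (not_le.2 hjk)
      have herase : (insert j σ').erase j = σ' := Finset.erase_insert hjσ'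
      have hne2 : ((insert j σ').erase j).Nonempty := by rw [herase]; exact ⟨k, hkσ⟩
      have : ∀ hh : ((insert j σ').erase j).Nonempty, ((insert j σ').erase j).min' hh = k := by
        intro hh
        apply le_antisymm
        · exact Finset.min'_le _ _ (by rw [herase]; exact hkσ)
        · apply Finset.le_min'
          intro m hm
          rw [herase] at hm
          exact (hall m hm).1
      exact Sigma.ext (this hne2) (heq_of_eq herase)
    · -- weights
      intro σ hσ
      rw [mem_incPaths] at hσ
      obtain ⟨hjσ, hiσ, hall⟩ := hσ
      have hne : (σ.erase j).Nonempty := ⟨i, Finset.mem_erase.2 ⟨fun hh => lt_irrefl i (hh ▸ hij), hiσ⟩⟩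
      set k := (σ.erase j).min' hne with hk
      have hkm : k ∈ σ.erase j := Finset.min'_mem _ hne
      have hjlt : ∀ m ∈ σ.erase j, j < m := by
        intro m hm
        rcases Finset.mem_erase.1 hm with ⟨hne', hmem⟩
        exact lt_of_le_of_ne (hall _ hmem).1 (Ne.symm hne')
      have := pathWeight_insert L (σ.erase j) j k hkm (fun m hm => Finset.min'_le _ _ hm) hjlt
      rw [Finset.insert_erase hjσ] at this
      exact this

lemma sum_mulVec {α : Type*} (s : Finset α) (M : α → Matrix (Fin n) (Fin n) ℝ)
    (v : Fin n → ℝ) :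
    (∑ a ∈ s, M a).mulVec v = ∑ a ∈ s, (M a).mulVec v := by
  induction s using Finset.cons_induction with
  | empty => simp [Matrix.zero_mulVec]
  | cons a s ha ih => rw [Finset.sum_cons, Finset.sum_cons, Matrix.add_mulVec, ih]

lemma mulVec_sum {α : Type*} (s : Finset α) (M : Matrix (Fin n) (Fin n) ℝ)
    (v : α → Fin n → ℝ) :
    M.mulVec (∑ a ∈ s, v a) = ∑ a ∈ s, M.mulVec (v a) := by
  induction s using Finset.cons_induction with
  | empty => simp [Matrix.mulVec_zero]
  | cons a s ha ih => rw [Finset.sum_cons, Finset.sum_cons, Matrix.mulVec_add, ih]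

/-- The key linear-algebra identity coming from the recursion for path weights. -/
lemma key_identity (L' : Fin N → Fin N → Matrix (Fin n) (Fin n) ℝ)
    (hL : ∀ k j : Fin N, k ≤ j → L' k j = 0) (v : Fin N → Fin n → ℝ) (i : Fin N) :
    ∑ j : Fin N, (∑ σ ∈ incPaths j i, pathWeight L' σ).mulVec
        (∑ k : Fin N, (L' j k).mulVec (v k))
      = (∑ j : Fin N, (∑ σ ∈ incPaths j i, pathWeight L' σ).mulVec (v j)) - v i := by
  set W : Fin N → Matrix (Fin n) (Fin n) ℝ := fun j => ∑ σ ∈ incPaths j i, pathWeight L' σ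
    with hW
  have h1 : ∀ j : Fin N, (W j).mulVec (∑ k : Fin N, (L' j k).mulVec (v k))
      = ∑ k : Fin N, ((W j) * L' j k).mulVec (v k) := by
    intro j
    rw [mulVec_sum]
    exact Finset.sum_congr rfl fun k _ => Matrix.mulVec_mulVec _ _ _
  have h2 : ∀ k : Fin N, (∑ j : Fin N, (W j) * L' j k)
      = W k - (if k = i then 1 else 0) := by
    intro k
    have hrec := weightSum_rec L' hL k i
    simp only [hW]
    rw [hrec]
    abel
  calc ∑ j : Fin N, (W j).mulVec (∑ k : Fin N, (L' j k).mulVec (v k))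
      = ∑ j : Fin N, ∑ k : Fin N, ((W j) * L' j k).mulVec (v k) :=
        Finset.sum_congr rfl fun j _ => h1 j
    _ = ∑ k : Fin N, ∑ j : Fin N, ((W j) * L' j k).mulVec (v k) := Finset.sum_comm
    _ = ∑ k : Fin N, (W k - (if k = i then 1 else 0)).mulVec (v k) := by
        refine Finset.sum_congr rfl fun k _ => ?_
        rw [← sum_mulVec, h2 k]
    _ = (∑ j : Fin N, (W j).mulVec (v j)) - v i := by
        simp_rw [Matrix.sub_mulVec]
        rw [Finset.sum_sub_distrib]
        congr 1
        have : ∀ k : Fin N, ((if k = i then (1 : Matrix (Fin n) (Fin n) ℝ) else 0)).mulVec (v k)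
            = if k = i then v k else 0 := by
          intro k
          split
          · rw [Matrix.one_mulVec]
          · rw [Matrix.zero_mulVec]
        simp_rw [this]
        simp

end Aux4p2

/-- **Theorem 4.2.** The impulsive linear Volterra equation
`x(s) = h(s) + ∫₀ˢ K(s,t)x(t)dt + ∑_{τᵢ<s} L(s,i)x(τᵢ)` is equivalent to the ordinary linear
Volterra equation `x(s) = 𝐡(s) + ∫₀ˢ 𝐊(s,t)x(t)dt` with the modified kernel
`𝐊(s,t) = K(s,t) + ∑_{i,j} ∑_{σ∈P(j,i)} L(s,i)·Λ(σ)·K(τⱼ,t)` and forcing term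
`𝐡(s) = h(s) + ∑_{i,j} ∑_{σ∈P(j,i)} L(s,i)·Λ(σ)·h(τⱼ)`. -/
theorem impulsive_linear_volterra_iff_modified_kernel
    (n N : ℕ) (T : ℝ) (hT : 0 < T)
    (τ : Fin N → ℝ) (hτmono : StrictMono τ) (hτpos : ∀ i, 0 < τ i) (hτlt : ∀ i, τ i < T)
    (K : ℝ → ℝ → Matrix (Fin n) (Fin n) ℝ)
    (hKmeas : ∀ i j : Fin n, Measurable (fun p : ℝ × ℝ => K p.1 p.2 i j))
    (hKbdd : ∃ M : ℝ, ∀ s t : ℝ, ‖K s t‖ ≤ M)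
    (hKzero : ∀ s t : ℝ, s ≤ t → K s t = 0)
    (L : ℝ → Fin N → Matrix (Fin n) (Fin n) ℝ)
    (hLmeas : ∀ (i : Fin N) (p q : Fin n), Measurable (fun s : ℝ => L s i p q))
    (hLbdd : ∃ M : ℝ, ∀ (s : ℝ) (i : Fin N), ‖L s i‖ ≤ M)
    (hLzero : ∀ (s : ℝ) (i : Fin N), s ≤ τ i → L s i = 0)
    (h : ℝ → (Fin n → ℝ)) (hhmeas : Measurable h) (hhbdd : ∃ M : ℝ, ∀ t ∈ Icc 0 T, ‖h t‖ ≤ M)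
    (x : ℝ → (Fin n → ℝ)) (hxmeas : Measurable x)
    (hxbdd : ∃ M : ℝ, ∀ t ∈ Icc 0 T, ‖x t‖ ≤ M)
    (hxlc : ∀ i : Fin N, Tendsto x (nhdsWithin (τ i) (Iio (τ i))) (nhds (x (τ i)))) :
    (∀ s ∈ Icc 0 T,
      x s = h s + (∫ t in (0:ℝ)..s, (K s t).mulVec (x t)) +
        ∑ i ∈ Finset.univ.filter (fun i : Fin N => τ i < s), (L s i).mulVec (x (τ i)))
    ↔
    (∀ s ∈ Icc 0 T,
      x s = (h s + ∑ i : Fin N, ∑ j : Fin N, ∑ σ ∈ incPaths j i,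
          (L s i * pathWeight (fun i' j' => L (τ i') j') σ).mulVec (h (τ j))) +
        ∫ t in (0:ℝ)..s,
          (K s t + ∑ i : Fin N, ∑ j : Fin N, ∑ σ ∈ incPaths j i,
            L s i * pathWeight (fun i' j' => L (τ i') j') σ * K (τ j) t).mulVec (x t)) := by
  classical
  obtain ⟨MK, hMK⟩ := hKbdd
  obtain ⟨Mx, hMx⟩ := hxbdd
  have hτmem : ∀ i, τ i ∈ Icc (0:ℝ) T := fun i => ⟨(hτpos i).le, (hτlt i).le⟩
  have hxint : ∀ r a b : ℝ, 0 ≤ a → b ≤ T → a ≤ b →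
      IntervalIntegrable (fun t => (K r t).mulVec (x t)) MeasureTheory.volume a b := by
    intro r a b ha hb hab
    rw [intervalIntegrable_iff_integrableOn_Ioc_of_le hab]
    have hmeas : Measurable fun t => (K r t).mulVec (x t) := by
      apply measurable_pi_lambda
      intro p
      simp only [Matrix.mulVec, dotProduct]
      exact Finset.measurable_sum _ fun q _ =>
        (((hKmeas p q).comp (measurable_const.prodMk measurable_id)).mul
          ((measurable_pi_apply q).comp hxmeas))
    refine MeasureTheory.Integrable.mono' (g := fun _ => MK * Mx)
      (MeasureTheory.integrableOn_const (C := MK * Mx) measure_Ioc_lt_top.ne)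
      hmeas.aestronglyMeasurable ?_
    rw [MeasureTheory.ae_restrict_iff' measurableSet_Ioc]
    refine Filter.Eventually.of_forall fun t ht => ?_
    calc ‖(K r t).mulVec (x t)‖ ≤ ‖K r t‖ * ‖x t‖ := Matrix.linfty_opNorm_mulVec _ _
      _ ≤ MK * Mx := by
          have hx := hMx t ⟨le_trans ha ht.1.le, le_trans ht.2 hb⟩
          exact mul_le_mul (hMK r t) hx (norm_nonneg _) (le_trans (norm_nonneg _) (hMK r t))
  have hpull : ∀ (M : Matrix (Fin n) (Fin n) ℝ) (f : ℝ → Fin n → ℝ) (a b : ℝ),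
      IntervalIntegrable f MeasureTheory.volume a b →
      (∫ t in a..b, M.mulVec (f t)) = M.mulVec (∫ t in a..b, f t) := by
    intro M f a b hf
    have := (LinearMap.toContinuousLinearMap M.mulVecLin).intervalIntegral_comp_comm hf
    simpa [LinearMap.coe_toContinuousLinearMap', Matrix.mulVecLin_apply] using this
  have hcompint : ∀ (M : Matrix (Fin n) (Fin n) ℝ) (f : ℝ → Fin n → ℝ) (a b : ℝ),
      IntervalIntegrable f MeasureTheory.volume a b →
      IntervalIntegrable (fun t => M.mulVec (f t)) MeasureTheory.volume a b := by
    intro M f a b hf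
    rw [intervalIntegrable_iff] at hf ⊢
    have := (LinearMap.toContinuousLinearMap M.mulVecLin).integrable_comp hf
    simp [LinearMap.coe_toContinuousLinearMap', Matrix.mulVecLin_apply] at this
    exact this
  set Lh : Fin N → Fin N → Matrix (Fin n) (Fin n) ℝ := fun i' j' => L (τ i') j' with hLh
  have hLh0 : ∀ k j : Fin N, k ≤ j → Lh k j = 0 := fun k j hkj =>
    hLzero _ _ (hτmono.monotone hkj)
  set W : Fin N → Fin N → Matrix (Fin n) (Fin n) ℝ :=
    fun j i => ∑ σ ∈ incPaths j i, pathWeight Lh σ with hW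
  set c : Fin N → Fin n → ℝ :=
    fun j => h (τ j) + ∫ t in (0:ℝ)..(τ j), (K (τ j) t).mulVec (x t) with hc
  set u : Fin N → Fin n → ℝ := fun i => ∑ j : Fin N, (W j i).mulVec (c j) with hu
  have hWii : ∀ i, W i i = 1 := by
    intro i
    simp only [hW]
    rw [Aux4p2.incPaths_self, Finset.sum_singleton, Aux4p2.pathWeight_singleton]
  have hWzero : ∀ {j i : Fin N}, i < j → W j i = 0 := by
    intro j i hij
    simp only [hW]
    rw [Aux4p2.incPaths_empty hij, Finset.sum_empty]
  have htrunc : ∀ (j : Fin N) (s : ℝ), τ j ≤ s → s ≤ T →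
      (∫ t in (0:ℝ)..s, (K (τ j) t).mulVec (x t))
        = ∫ t in (0:ℝ)..(τ j), (K (τ j) t).mulVec (x t) := by
    intro j s hjs hsT
    have h1 := hxint (τ j) 0 (τ j) le_rfl (hτlt j).le (hτpos j).le
    have h2 : IntervalIntegrable (fun t => (K (τ j) t).mulVec (x t))
        MeasureTheory.volume (τ j) s := hxint (τ j) (τ j) s (hτpos j).le hsT hjs
    rw [← intervalIntegral.integral_add_adjacent_intervals h1 h2]
    have hz : (∫ t in (τ j)..s, (K (τ j) t).mulVec (x t)) = 0 := by
      have heq : EqOn (fun t => (K (τ j) t).mulVec (x t)) (fun _ => (0 : Fin n → ℝ))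
          (uIcc (τ j) s) := by
        intro t ht
        rw [uIcc_of_le hjs] at ht
        show (K (τ j) t).mulVec (x t) = 0
        rw [hKzero _ _ ht.1, Matrix.zero_mulVec]
      rw [intervalIntegral.integral_congr heq, intervalIntegral.integral_zero]
    rw [hz, add_zero]
  have hfilter : ∀ s : ℝ,
      (∑ i ∈ Finset.univ.filter (fun i : Fin N => τ i < s), (L s i).mulVec (x (τ i)))
        = ∑ i : Fin N, (L s i).mulVec (x (τ i)) := by
    intro s
    refine Finset.sum_subset (Finset.filter_subset _ _) ?_
    intro i _ hi
    rw [Finset.mem_filter, not_and] at hi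
    rw [hLzero s i (not_lt.1 (hi (Finset.mem_univ i))), Matrix.zero_mulVec]
  have hOrd : ∀ s : ℝ, 0 ≤ s → s ≤ T →
      ((h s + ∑ i : Fin N, ∑ j : Fin N, ∑ σ ∈ incPaths j i,
          (L s i * pathWeight Lh σ).mulVec (h (τ j))) +
        ∫ t in (0:ℝ)..s, (K s t + ∑ i : Fin N, ∑ j : Fin N, ∑ σ ∈ incPaths j i,
            L s i * pathWeight Lh σ * K (τ j) t).mulVec (x t))
      = h s + (∫ t in (0:ℝ)..s, (K s t).mulVec (x t))
          + ∑ i : Fin N, (L s i).mulVec (u i) := by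
    intro s hs0 hsT
    set B : Fin N → Matrix (Fin n) (Fin n) ℝ :=
      fun j => ∑ i : Fin N, ∑ σ ∈ incPaths j i, L s i * pathWeight Lh σ with hB
    have hgint : ∀ j : Fin N, IntervalIntegrable (fun t => (K (τ j) t).mulVec (x t))
        MeasureTheory.volume 0 s := fun j => hxint (τ j) 0 s le_rfl hsT hs0
    have claim1 : (∑ i : Fin N, ∑ j : Fin N, ∑ σ ∈ incPaths j i,
        (L s i * pathWeight Lh σ).mulVec (h (τ j)))
        = ∑ j : Fin N, (B j).mulVec (h (τ j)) := by
      rw [Finset.sum_comm]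
      refine Finset.sum_congr rfl fun j _ => ?_
      simp only [hB]
      rw [Aux4p2.sum_mulVec]
      exact Finset.sum_congr rfl fun i _ => (Aux4p2.sum_mulVec _ _ _).symm
    have claim2 : ∀ t : ℝ, (K s t + ∑ i : Fin N, ∑ j : Fin N, ∑ σ ∈ incPaths j i,
          L s i * pathWeight Lh σ * K (τ j) t).mulVec (x t)
        = (K s t).mulVec (x t)
          + ∑ j : Fin N, (B j).mulVec ((K (τ j) t).mulVec (x t)) := by
      intro t
      rw [Matrix.add_mulVec]
      congr 1
      calc (∑ i : Fin N, ∑ j : Fin N, ∑ σ ∈ incPaths j i,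
            L s i * pathWeight Lh σ * K (τ j) t).mulVec (x t)
          = ∑ i : Fin N, ∑ j : Fin N, ∑ σ ∈ incPaths j i,
              (L s i * pathWeight Lh σ).mulVec ((K (τ j) t).mulVec (x t)) := by
            rw [Aux4p2.sum_mulVec]
            refine Finset.sum_congr rfl fun i _ => ?_
            rw [Aux4p2.sum_mulVec]
            refine Finset.sum_congr rfl fun j _ => ?_
            rw [Aux4p2.sum_mulVec]
            exact Finset.sum_congr rfl fun σ _ => (Matrix.mulVec_mulVec _ _ _).symm
        _ = ∑ j : Fin N, (B j).mulVec ((K (τ j) t).mulVec (x t)) := by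
            rw [Finset.sum_comm]
            refine Finset.sum_congr rfl fun j _ => ?_
            simp only [hB]
            rw [Aux4p2.sum_mulVec]
            exact Finset.sum_congr rfl fun i _ => (Aux4p2.sum_mulVec _ _ _).symm
    have hint2 : ∀ j : Fin N, IntervalIntegrable
        (fun t => (B j).mulVec ((K (τ j) t).mulVec (x t))) MeasureTheory.volume 0 s :=
      fun j => hcompint _ _ _ _ (hgint j)
    have step : (∫ t in (0:ℝ)..s, (K s t + ∑ i : Fin N, ∑ j : Fin N, ∑ σ ∈ incPaths j i,
          L s i * pathWeight Lh σ * K (τ j) t).mulVec (x t))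
        = (∫ t in (0:ℝ)..s, (K s t).mulVec (x t))
          + ∑ j : Fin N, (B j).mulVec (∫ t in (0:ℝ)..s, (K (τ j) t).mulVec (x t)) := by
      rw [intervalIntegral.integral_congr (g := fun t => (K s t).mulVec (x t)
            + ∑ j : Fin N, (B j).mulVec ((K (τ j) t).mulVec (x t))) (fun t _ => claim2 t)]
      have hsumint : IntervalIntegrable
          (fun t => ∑ j : Fin N, (B j).mulVec ((K (τ j) t).mulVec (x t)))
          MeasureTheory.volume 0 s := by
        have hsum := IntervalIntegrable.sum (μ := MeasureTheory.volume) (a := (0:ℝ)) (b := s)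
          (f := fun (j : Fin N) (t : ℝ) => (B j).mulVec ((K (τ j) t).mulVec (x t)))
          Finset.univ (fun j _ => hint2 j)
        simpa only [Finset.sum_fn] using hsum
      rw [intervalIntegral.integral_add (hxint s 0 s le_rfl hsT hs0) hsumint]
      congr 1
      rw [intervalIntegral.integral_finset_sum fun j _ => hint2 j]
      exact Finset.sum_congr rfl fun j _ => hpull _ _ _ _ (hgint j)
    have hBmul : ∀ j : Fin N,
        (B j).mulVec (h (τ j) + ∫ t in (0:ℝ)..s, (K (τ j) t).mulVec (x t))
          = (B j).mulVec (c j) := by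
      intro j
      rcases le_or_gt (τ j) s with hjs | hsj
      · rw [htrunc j s hjs hsT]
      · have hBj : B j = 0 := by
          simp only [hB]
          refine Finset.sum_eq_zero fun i _ => Finset.sum_eq_zero fun σ hσ => ?_
          have hm := Aux4p2.mem_incPaths.1 hσ
          have hji : j ≤ i := (hm.2.2 j hm.1).2
          rw [hLzero s i (le_of_lt (lt_of_lt_of_le hsj (hτmono.monotone hji))), zero_mul]
        rw [hBj, Matrix.zero_mulVec, Matrix.zero_mulVec]
    have final : ∑ j : Fin N, (B j).mulVec (c j) = ∑ i : Fin N, (L s i).mulVec (u i) := by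
      calc ∑ j : Fin N, (B j).mulVec (c j)
          = ∑ j : Fin N, ∑ i : Fin N, ∑ σ ∈ incPaths j i,
              (L s i).mulVec ((pathWeight Lh σ).mulVec (c j)) := by
            refine Finset.sum_congr rfl fun j _ => ?_
            simp only [hB]
            rw [Aux4p2.sum_mulVec]
            refine Finset.sum_congr rfl fun i _ => ?_
            rw [Aux4p2.sum_mulVec]
            exact Finset.sum_congr rfl fun σ _ => (Matrix.mulVec_mulVec _ _ _).symm
        _ = ∑ i : Fin N, (L s i).mulVec (u i) := by
            rw [Finset.sum_comm]
            refine Finset.sum_congr rfl fun i _ => ?_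
            simp only [hu, hW]
            rw [Aux4p2.mulVec_sum]
            refine Finset.sum_congr rfl fun j _ => ?_
            rw [Aux4p2.sum_mulVec, Aux4p2.mulVec_sum]
    rw [claim1, step, ← final]
    have hcomb : (∑ j : Fin N, (B j).mulVec (h (τ j)))
        + ∑ j : Fin N, (B j).mulVec (∫ t in (0:ℝ)..s, (K (τ j) t).mulVec (x t))
        = ∑ j : Fin N, (B j).mulVec (c j) := by
      rw [← Finset.sum_add_distrib]
      refine Finset.sum_congr rfl fun j _ => ?_
      rw [← Matrix.mulVec_add, hBmul j]
    rw [← hcomb]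
    abel
  constructor
  · intro himp
    have hxτ : ∀ j : Fin N, x (τ j) = c j + ∑ k : Fin N, (Lh j k).mulVec (x (τ k)) := by
      intro j
      have H := himp (τ j) (hτmem j)
      rw [hfilter (τ j)] at H
      simp only [hc, hLh]
      exact H
    have hux : ∀ i, u i = x (τ i) := by
      intro i
      have hcs : ∀ j, c j = x (τ j) - ∑ k : Fin N, (Lh j k).mulVec (x (τ k)) := by
        intro j; rw [hxτ j]; abel
      simp only [hu]
      calc ∑ j : Fin N, (W j i).mulVec (c j)
          = ∑ j : Fin N, ((W j i).mulVec (x (τ j))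
              - (W j i).mulVec (∑ k : Fin N, (Lh j k).mulVec (x (τ k)))) := by
            refine Finset.sum_congr rfl fun j _ => ?_
            rw [hcs j, Matrix.mulVec_sub]
        _ = (∑ j : Fin N, (W j i).mulVec (x (τ j)))
              - ∑ j : Fin N, (W j i).mulVec (∑ k : Fin N, (Lh j k).mulVec (x (τ k))) :=
            Finset.sum_sub_distrib _ _
        _ = x (τ i) := by
            have hk := Aux4p2.key_identity Lh hLh0 (fun k => x (τ k)) i
            simp only [hW]
            rw [hk]
            abel
    intro s hs
    have H := himp s hs
    rw [hfilter s] at H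
    rw [hOrd s hs.1 hs.2]
    simp_rw [hux]
    exact H
  · intro hord
    have hxτ2 : ∀ i : Fin N, x (τ i) = c i + ∑ k : Fin N, (Lh i k).mulVec (u k) := by
      intro i
      have H := hord (τ i) (hτmem i)
      rw [hOrd (τ i) (hτpos i).le (hτlt i).le] at H
      simp only [hc, hLh]
      exact H
    have hker : ∀ i : Fin N, ∑ j : Fin N, (W j i).mulVec (x (τ j) - u j) = 0 := by
      intro i
      have hcs : ∀ j, c j = x (τ j) - ∑ k : Fin N, (Lh j k).mulVec (u k) := by
        intro j; rw [hxτ2 j]; abel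
      have h2 : ∑ j : Fin N, (W j i).mulVec (c j)
          = (∑ j : Fin N, (W j i).mulVec (x (τ j)))
            - ((∑ j : Fin N, (W j i).mulVec (u j)) - u i) := by
        calc ∑ j : Fin N, (W j i).mulVec (c j)
            = ∑ j : Fin N, ((W j i).mulVec (x (τ j))
                - (W j i).mulVec (∑ k : Fin N, (Lh j k).mulVec (u k))) := by
              refine Finset.sum_congr rfl fun j _ => ?_
              rw [hcs j, Matrix.mulVec_sub]
          _ = (∑ j : Fin N, (W j i).mulVec (x (τ j)))
                - ∑ j : Fin N, (W j i).mulVec (∑ k : Fin N, (Lh j k).mulVec (u k)) :=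
              Finset.sum_sub_distrib _ _
          _ = _ := by
              have hk := Aux4p2.key_identity Lh hLh0 u i
              simp only [hW]
              rw [hk]
      have h3 : u i = ∑ j : Fin N, (W j i).mulVec (c j) := by simp only [hu]
      have h4 : (∑ j : Fin N, (W j i).mulVec (x (τ j)))
          - (∑ j : Fin N, (W j i).mulVec (u j)) = 0 := by
        have h5 := h3.trans h2
        rw [eq_sub_iff_add_eq] at h5
        rw [← h5]
        abel
      calc ∑ j : Fin N, (W j i).mulVec (x (τ j) - u j)
          = ∑ j : Fin N, ((W j i).mulVec (x (τ j)) - (W j i).mulVec (u j)) :=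
            Finset.sum_congr rfl fun j _ => Matrix.mulVec_sub _ _ _
        _ = (∑ j : Fin N, (W j i).mulVec (x (τ j)))
              - ∑ j : Fin N, (W j i).mulVec (u j) := Finset.sum_sub_distrib _ _
        _ = 0 := h4
    have hxu : ∀ i : Fin N, x (τ i) = u i := by
      have key : ∀ m : ℕ, ∀ i : Fin N, (i : ℕ) = m → x (τ i) - u i = 0 := by
        intro m
        induction m using Nat.strong_induction_on with
        | _ m ih =>
          intro i him
          have h0 := hker i
          rw [Finset.sum_eq_single i ?_ ?_] at h0
          · rwa [hWii i, Matrix.one_mulVec] at h0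
          · intro j _ hji
            rcases lt_or_gt_of_ne hji with hlt | hgt
            · have hz := ih (j : ℕ) (by rw [← him]; exact hlt) j rfl
              rw [hz, Matrix.mulVec_zero]
            · rw [hWzero hgt, Matrix.zero_mulVec]
          · intro hi; exact absurd (Finset.mem_univ i) hi
      intro i
      exact sub_eq_zero.1 (key (i : ℕ) i rfl)
    intro s hs
    have H := hord s hs
    rw [hOrd s hs.1 hs.2] at H
    rw [hfilter s]
    simp_rw [hxu]
    exact H
end
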